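/- Let G be a finite simple graph with n vertices and m edges, and let k and d be positive integers. Let G' be the graph obtained from G as follows: every edge e = {u,v} of G is replaced by a path on vertices u, u_v, y_e, v_u, v (where u_v, y_e, v_u are new vertices), and d − 1 new pendant leaves are attached to y_e. Then G has a set S ⊆ V(G) with |S| ≤ k such that every vertex of G − S has degree at most d in G − S, if and only if G' has a set S' ⊆ V(G') with |S'| ≤ k + m such that every connected component of G' − S' has at most d + 1 vertices. -/

import Mathlib

open SimpleGraph

variable {V : Type*}

/-- The vertex sets of the connected components of `G − S`
(the subgraph of `G` induced on the complement of `S`). -/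
def ccSets {W : Type*} (G : SimpleGraph W) (S : Set W) : Set (Set W) :=
  {D | ∃ c : (G.induce Sᶜ).ConnectedComponent, D = Subtype.val '' c.supp}

/-- The vertex type of the graph `G'` obtained from `G` by subdividing every edge
`e = {u,v}` three times (new vertices `u_v`, `y_e`, `v_u`) and attaching `d − 1` pendant
leaves to `y_e`: original vertices, one vertex `u_v` per ordered adjacent pair `(u,v)`, one
vertex `y_e` per edge `e`, and `d − 1` leaves per edge. -/
abbrev SubVert (G : SimpleGraph V) (d : ℕ) : Type _ :=
  V ⊕ {p : V × V // G.Adj p.1 p.2} ⊕ ↥G.edgeSet ⊕ (↥G.edgeSet × Fin (d - 1))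

/-- The base adjacency relation of `G'`: `u ~ u_v`; `u_v ~ y_e` for `e = {u,v}`;
`y_e ~` each of its `d − 1` leaves. -/
def subRel (G : SimpleGraph V) (d : ℕ) : SubVert G d → SubVert G d → Prop
  | Sum.inl a, Sum.inr (Sum.inl p) => a = p.1.1
  | Sum.inr (Sum.inl p), Sum.inr (Sum.inr (Sum.inl e)) => (e : Sym2 V) = s(p.1.1, p.1.2)
  | Sum.inr (Sum.inr (Sum.inl e)), Sum.inr (Sum.inr (Sum.inr q)) => e = q.1
  | _, _ => False

/-- The graph `G'` obtained from `G` by subdividing every edge three times and attaching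
`d − 1` pendant leaves to the middle vertex of each subdivided edge. -/
def subGraph (G : SimpleGraph V) (d : ℕ) : SimpleGraph (SubVert G d) :=
  SimpleGraph.fromRel (subRel G d)

set_option maxHeartbeats 1000000

/- ## Auxiliary definitions -/

variable (G : SimpleGraph V) (d : ℕ)

abbrev ov (u : V) : SubVert G d := Sum.inl u
abbrev pv (p : {p : V × V // G.Adj p.1 p.2}) : SubVert G d := Sum.inr (Sum.inl p)
abbrev yv (e : G.edgeSet) : SubVert G d := Sum.inr (Sum.inr (Sum.inl e))
abbrev lv (e : G.edgeSet) (i : Fin (d - 1)) : SubVert G d := Sum.inr (Sum.inr (Sum.inr (e, i)))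

variable {G d}

lemma adj_ov_pv (u : V) (p) (h : p.1.1 = u) : (subGraph G d).Adj (ov G d u) (pv G d p) := by
  simp [subGraph, subRel, h.symm]

lemma adj_pv_yv (p) (e : G.edgeSet) (h : (e : Sym2 V) = s(p.1.1, p.1.2)) :
    (subGraph G d).Adj (pv G d p) (yv G d e) := by
  simp [subGraph, subRel, h]

lemma adj_yv_lv (e : G.edgeSet) (i : Fin (d - 1)) :
    (subGraph G d).Adj (yv G d e) (lv G d e i) := by
  simp [subGraph, subRel]

lemma adj_elim {a b : SubVert G d} (h : (subGraph G d).Adj a b) :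
    (∃ u p, (a = ov G d u ∧ b = pv G d p ∨ a = pv G d p ∧ b = ov G d u) ∧ p.1.1 = u) ∨
    (∃ p e, (a = pv G d p ∧ b = yv G d e ∨ a = yv G d e ∧ b = pv G d p) ∧
      (e : Sym2 V) = s(p.1.1, p.1.2)) ∨
    (∃ e i, a = yv G d e ∧ b = lv G d e i ∨ a = lv G d e i ∧ b = yv G d e) := by
  rcases a with u | p | e | ⟨e, i⟩ <;> rcases b with u' | p' | e' | ⟨e', i'⟩ <;>
    simp [subGraph, subRel] at h
  · exact Or.inl ⟨u, p', Or.inl ⟨rfl, rfl⟩, h.symm⟩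
  · exact Or.inl ⟨u', p, Or.inr ⟨rfl, rfl⟩, h.symm⟩
  · exact Or.inr (Or.inl ⟨p, e', Or.inl ⟨rfl, rfl⟩, by simpa using h⟩)
  · exact Or.inr (Or.inl ⟨p', e, Or.inr ⟨rfl, rfl⟩, by simpa using h⟩)
  · exact Or.inr (Or.inr ⟨e', i', Or.inl ⟨by rw [h], rfl⟩⟩)
  · exact Or.inr (Or.inr ⟨e', i, Or.inr ⟨by rw [h], rfl⟩⟩)

/- ## Component helpers -/

lemma walk_closed {W : Type*} {H : SimpleGraph W} {T : Set W}
    (hcl : ∀ a b, a ∈ T → H.Adj a b → b ∈ T) :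
    ∀ {x y : W}, H.Walk x y → x ∈ T → y ∈ T := by
  intro x y w
  induction w with
  | nil => exact id
  | cons h _ ih => exact fun hx => ih (hcl _ _ hx h)

lemma comp_subset_of_closed {W : Type*} (H : SimpleGraph W) (S : Set W) (x : ↥Sᶜ)
    (T : Set W) (hx : ↑x ∈ T)
    (hcl : ∀ a b : W, a ∈ T → a ∉ S → b ∉ S → H.Adj a b → b ∈ T) :
    Subtype.val '' ((H.induce Sᶜ).connectedComponentMk x).supp ⊆ T := by
  rintro _ ⟨y, hy, rfl⟩
  rw [ConnectedComponent.mem_supp_iff] at hy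
  obtain ⟨w⟩ := (ConnectedComponent.eq.mp hy).symm
  exact walk_closed (T := Subtype.val ⁻¹' T)
    (fun a b ha hab => hcl ↑a ↑b ha a.2 b.2 hab) w hx

lemma mem_ccSets {W : Type*} (H : SimpleGraph W) (S : Set W) (x : ↥Sᶜ) :
    Subtype.val '' ((H.induce Sᶜ).connectedComponentMk x).supp ∈ ccSets H S :=
  ⟨_, rfl⟩

lemma ccSets_elim {W : Type*} {H : SimpleGraph W} {S : Set W} {D : Set W}
    (hD : D ∈ ccSets H S) :
    ∃ x : ↥Sᶜ, D = Subtype.val '' ((H.induce Sᶜ).connectedComponentMk x).supp := by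
  obtain ⟨c, rfl⟩ := hD
  obtain ⟨x, hx⟩ := c.exists_rep
  exact ⟨x, by rw [← hx]; rfl⟩

lemma mem_comp_of_reachable {W : Type*} {H : SimpleGraph W} {S : Set W} {x y : ↥Sᶜ}
    (h : (H.induce Sᶜ).Reachable y x) :
    ↑y ∈ Subtype.val '' ((H.induce Sᶜ).connectedComponentMk x).supp :=
  ⟨y, ConnectedComponent.sound h, rfl⟩

lemma reach_step {W : Type*} {H : SimpleGraph W} {S : Set W} {a b : W}
    (ha : a ∉ S) (hb : b ∉ S) (hab : H.Adj a b) :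
    (H.induce Sᶜ).Reachable (⟨a, ha⟩ : ↥Sᶜ) ⟨b, hb⟩ :=
  SimpleGraph.Adj.reachable hab

lemma forward [Fintype V] [DecidableEq V] (G : SimpleGraph V) (k d m : ℕ) (hd : 0 < d)
    (hm : m = G.edgeSet.ncard)
    (S : Set V) (hScard : S.ncard ≤ k)
    (hSdeg : ∀ v ∉ S, ((G.neighborSet v) \ S).ncard ≤ d) :
    ∃ S' : Set (SubVert G d), S'.ncard ≤ k + m ∧
      ∀ D ∈ ccSets (subGraph G d) S', D.ncard ≤ d + 1 := by
  classical
  set C : G.edgeSet → Prop := fun e => ∀ u v : V, (e : Sym2 V) = s(u, v) → (u ∈ S ↔ v ∈ S)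
    with hC
  have key : ∀ e : G.edgeSet, ¬ C e →
      ∃ p : {p : V × V // G.Adj p.1 p.2},
        (e : Sym2 V) = s(p.1.1, p.1.2) ∧ p.1.1 ∉ S ∧ p.1.2 ∈ S := by
    intro e hCe
    simp only [hC, not_forall] at hCe
    obtain ⟨u, v, huv, hne⟩ := hCe
    have hadj : G.Adj u v := by rw [← SimpleGraph.mem_edgeSet, ← huv]; exact e.2
    by_cases hu : u ∈ S
    · have hv : v ∉ S := fun hv => hne (iff_of_true hu hv)
      exact ⟨⟨(v, u), hadj.symm⟩, by rw [huv]; exact Sym2.eq_swap, hv, hu⟩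
    · have hv : v ∈ S := by by_contra hv; exact hne (iff_of_false hu hv)
      exact ⟨⟨(u, v), hadj⟩, huv, hu, hv⟩
  choose pk hpk1 hpk2 hpk3 using key
  set g : G.edgeSet → SubVert G d :=
    fun e => if h : C e then yv G d e else pv G d (pk e h) with hg
  set S' : Set (SubVert G d) := (Sum.inl '' S) ∪ Set.range g with hS'
  -- membership characterizations
  have hOV : ∀ u : V, (ov G d u ∈ S') ↔ u ∈ S := by
    intro u
    constructor
    · rintro (⟨w, hw, hwe⟩ | ⟨e, he⟩)
      · obtain rfl : w = u := by simpa using hwe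
        exact hw
      · exfalso
        by_cases hce : C e
        · rw [hg] at he; simp only [dif_pos hce] at he; simp at he
        · rw [hg] at he; simp only [dif_neg hce] at he; simp at he
    · exact fun h => Or.inl ⟨u, h, rfl⟩
  have hLV : ∀ (e : G.edgeSet) (i : Fin (d - 1)), lv G d e i ∉ S' := by
    rintro e i (⟨w, hw, hwe⟩ | ⟨e', he⟩)
    · simp at hwe
    · by_cases hce : C e'
      · rw [hg] at he; simp only [dif_pos hce] at he; simp at he
      · rw [hg] at he; simp only [dif_neg hce] at he; simp at he
  have hYV : ∀ e : G.edgeSet, yv G d e ∈ S' ↔ C e := by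
    intro e
    constructor
    · rintro (⟨w, hw, hwe⟩ | ⟨e', he⟩)
      · simp at hwe
      · by_cases hce : C e'
        · rw [hg] at he; simp only [dif_pos hce] at he
          obtain rfl : e' = e := by simpa using he
          exact hce
        · rw [hg] at he; simp only [dif_neg hce] at he; simp at he
    · intro h
      exact Or.inr ⟨e, by rw [hg]; exact dif_pos h⟩
  have hPV : ∀ p : {p : V × V // G.Adj p.1 p.2},
      pv G d p ∈ S' ↔ (p.1.1 ∉ S ∧ p.1.2 ∈ S) := by
    intro p
    constructor
    · rintro (⟨w, hw, hwe⟩ | ⟨e', he⟩)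
      · simp at hwe
      · by_cases hce : C e'
        · rw [hg] at he; simp only [dif_pos hce] at he; simp at he
        · rw [hg] at he; simp only [dif_neg hce] at he
          obtain rfl : pk e' hce = p := by simpa using he
          exact ⟨hpk2 e' hce, hpk3 e' hce⟩
    · rintro ⟨h1, h2⟩
      have hmem : s(p.1.1, p.1.2) ∈ G.edgeSet := (G.mem_edgeSet).mpr p.2
      set e : G.edgeSet := ⟨s(p.1.1, p.1.2), hmem⟩ with he
      have hCe : ¬ C e := by
        intro hc
        exact h1 ((hc p.1.1 p.1.2 rfl).mpr h2)
      refine Or.inr ⟨e, ?_⟩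
      rw [hg]; simp only [dif_neg hCe]
      have h4 := hpk1 e hCe
      have h5 : s(p.1.1, p.1.2) = s((pk e hCe).1.1, (pk e hCe).1.2) := h4
      rcases Sym2.eq_iff.mp h5 with ⟨ha, hb⟩ | ⟨ha, hb⟩
      · have : pk e hCe = p := Subtype.ext (Prod.ext ha.symm hb.symm)
        rw [this]
      · exact absurd (ha ▸ hpk3 e hCe) h1
  -- cardinality of S'
  have hS'card : S'.ncard ≤ k + m := by
    have h1 : (Sum.inl '' S : Set (SubVert G d)).ncard = S.ncard :=
      Set.ncard_image_of_injective _ Sum.inl_injective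
    have h2 : (Set.range g).ncard ≤ m := by
      rw [← Set.image_univ]
      calc (g '' Set.univ).ncard ≤ (Set.univ : Set G.edgeSet).ncard :=
            Set.ncard_image_le (Set.toFinite _)
        _ = Nat.card G.edgeSet := Set.ncard_univ _
        _ = G.edgeSet.ncard := Nat.card_coe_set_eq _
        _ = m := hm.symm
    calc S'.ncard ≤ (Sum.inl '' S : Set (SubVert G d)).ncard + (Set.range g).ncard :=
          Set.ncard_union_le _ _
      _ ≤ k + m := by rw [h1]; omega
  refine ⟨S', hS'card, ?_⟩
  -- component bounds
  intro D hD
  obtain ⟨x, rfl⟩ := ccSets_elim hD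
  have hsub : ∀ T : Set (SubVert G d), ↑x ∈ T →
      (∀ a b, a ∈ T → a ∉ S' → b ∉ S' → (subGraph G d).Adj a b → b ∈ T) →
      (Subtype.val ''
        (((subGraph G d).induce S'ᶜ).connectedComponentMk x).supp).ncard ≤ T.ncard :=
    fun T hx hcl => Set.ncard_le_ncard (comp_subset_of_closed _ _ _ _ hx hcl) (Set.toFinite T)
  -- Block A : component of a surviving original vertex
  have blockA : ∀ u : V, u ∉ S →
      (↑x ∈ ({ov G d u} ∪ {z | ∃ p, z = pv G d p ∧ p.1.1 = u ∧ p.1.2 ∉ S} :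
        Set (SubVert G d))) →
      (Subtype.val ''
        (((subGraph G d).induce S'ᶜ).connectedComponentMk x).supp).ncard ≤ d + 1 := by
    intro u hu hxT
    set P : Set (SubVert G d) := {z | ∃ p, z = pv G d p ∧ p.1.1 = u ∧ p.1.2 ∉ S} with hP
    have hcl : ∀ a b, a ∈ ({ov G d u} ∪ P : Set (SubVert G d)) → a ∉ S' → b ∉ S' →
        (subGraph G d).Adj a b → b ∈ ({ov G d u} ∪ P : Set (SubVert G d)) := by
      rintro a b (ha | ⟨p, rfl, hp1, hp2⟩) haS' hbS' hadj
      · rw [Set.mem_singleton_iff] at ha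
        subst ha
        rcases adj_elim hadj with ⟨u', p', (⟨h1, h2⟩ | ⟨h1, h2⟩), h3⟩ |
          ⟨p', e', (⟨h1, h2⟩ | ⟨h1, h2⟩), h3⟩ | ⟨e', i', (⟨h1, h2⟩ | ⟨h1, h2⟩)⟩ <;>
          try simp at h1
        · -- b = pv p', p'.1.1 = u' = u
          obtain rfl : u = u' := h1
          subst h2
          have : ¬ (p'.1.1 ∉ S ∧ p'.1.2 ∈ S) := fun hc => hbS' ((hPV p').mpr hc)
          refine Or.inr ⟨p', rfl, h3, ?_⟩
          intro hc
          exact this ⟨h3 ▸ hu, hc⟩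
      · -- a = pv p with p.1.1 = u, p.1.2 ∉ S
        rcases adj_elim hadj with ⟨u', p', (⟨h1, h2⟩ | ⟨h1, h2⟩), h3⟩ |
          ⟨p', e', (⟨h1, h2⟩ | ⟨h1, h2⟩), h3⟩ | ⟨e', i', (⟨h1, h2⟩ | ⟨h1, h2⟩)⟩ <;>
          try simp at h1
        · -- b = ov u' with p'.1.1 = u', p' = p
          obtain rfl : p = p' := h1
          subst h2
          obtain rfl : u' = u := h3.symm.trans hp1
          left
          rfl
        · -- b = yv e' with e' = s(p.1.1, p.1.2); both endpoints outside S : contradiction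
          obtain rfl : p = p' := h1
          subst h2
          exfalso
          apply hbS'
          refine (hYV e').mpr ?_
          intro α β hαβ
          rw [h3] at hαβ
          rcases Sym2.eq_iff.mp hαβ with ⟨ha, hb⟩ | ⟨ha, hb⟩
          · subst ha; subst hb; exact iff_of_false (hp1 ▸ hu) hp2
          · subst ha; subst hb; exact iff_of_false hp2 (hp1 ▸ hu)
    have hTcard : (({ov G d u} ∪ P : Set (SubVert G d))).ncard ≤ d + 1 := by
      have hPsub : P ⊆ (fun v : V => if h : G.Adj u v then pv G d ⟨(u, v), h⟩ else ov G d u) ''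
          (G.neighborSet u \ S) := by
        rintro z ⟨p, rfl, h1, h2⟩
        have hadj : G.Adj u p.1.2 := h1 ▸ p.2
        refine ⟨p.1.2, ⟨hadj, h2⟩, ?_⟩
        dsimp only
        rw [dif_pos hadj]
        congr 1
        exact Subtype.ext (Prod.ext h1.symm rfl)
      have hPcard : P.ncard ≤ d := by
        calc P.ncard ≤ ((fun v : V => if h : G.Adj u v then pv G d ⟨(u, v), h⟩ else ov G d u) ''
              (G.neighborSet u \ S)).ncard := Set.ncard_le_ncard hPsub (Set.toFinite _)
          _ ≤ (G.neighborSet u \ S).ncard := Set.ncard_image_le (Set.toFinite _)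
          _ ≤ d := hSdeg u hu
      calc ({ov G d u} ∪ P : Set (SubVert G d)).ncard = (insert (ov G d u) P).ncard := by
            rw [Set.singleton_union]
        _ ≤ P.ncard + 1 := Set.ncard_insert_le _ _
        _ ≤ d + 1 := by omega
    exact le_trans (hsub _ hxT hcl) hTcard
  -- Block B : gadget component (edge with exactly one endpoint deleted)
  have blockB : ∀ (e : G.edgeSet) (p : {p : V × V // G.Adj p.1 p.2}),
      (e : Sym2 V) = s(p.1.1, p.1.2) → p.1.1 ∈ S → p.1.2 ∉ S →
      ↑x ∈ insert (pv G d p) (insert (yv G d e) (Set.range (lv G d e))) →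
      (Subtype.val ''
        (((subGraph G d).induce S'ᶜ).connectedComponentMk x).supp).ncard ≤ d + 1 := by
    intro e p he hp1 hp2 hxT
    set T : Set (SubVert G d) := insert (pv G d p) (insert (yv G d e) (Set.range (lv G d e)))
      with hT
    have hcl : ∀ a b, a ∈ T → a ∉ S' → b ∉ S' → (subGraph G d).Adj a b → b ∈ T := by
      rintro a b (rfl | rfl | ⟨i, rfl⟩) haS' hbS' hadj
      · rcases adj_elim hadj with ⟨u', p', (⟨h1, h2⟩ | ⟨h1, h2⟩), h3⟩ |
          ⟨p', e', (⟨h1, h2⟩ | ⟨h1, h2⟩), h3⟩ | ⟨e', i', (⟨h1, h2⟩ | ⟨h1, h2⟩)⟩ <;>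
          try simp at h1
        · -- b = ov u' with u' = p.1.1 ∈ S : contradiction
          obtain rfl : p = p' := h1
          subst h2
          exact absurd ((hOV _).mpr (h3 ▸ hp1)) hbS'
        · -- b = yv e' with e' = s(p.1.1,p.1.2) = e
          obtain rfl : p = p' := h1
          subst h2
          have : e' = e := Subtype.ext (by rw [h3, he])
          right; left; rw [this]
      · rcases adj_elim hadj with ⟨u', p', (⟨h1, h2⟩ | ⟨h1, h2⟩), h3⟩ |
          ⟨p', e', (⟨h1, h2⟩ | ⟨h1, h2⟩), h3⟩ | ⟨e', i', (⟨h1, h2⟩ | ⟨h1, h2⟩)⟩ <;>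
          try simp at h1
        · -- a = yv e, b = pv p' with e = s(p'.1.1, p'.1.2)
          obtain rfl : e = e' := h1
          subst h2
          rw [he] at h3
          rcases Sym2.eq_iff.mp h3.symm with ⟨ha, hb⟩ | ⟨ha, hb⟩
          · left
            have : p' = p := Subtype.ext (Prod.ext ha hb)
            rw [this]
          · exfalso
            exact hbS' ((hPV p').mpr ⟨ha ▸ hp2, hb ▸ hp1⟩)
        · -- b = lv e i'
          obtain rfl : e = e' := h1
          subst h2
          right; right; exact ⟨i', rfl⟩
      · rcases adj_elim hadj with ⟨u', p', (⟨h1, h2⟩ | ⟨h1, h2⟩), h3⟩ |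
          ⟨p', e', (⟨h1, h2⟩ | ⟨h1, h2⟩), h3⟩ | ⟨e', i', (⟨h1, h2⟩ | ⟨h1, h2⟩)⟩ <;>
          try simp at h1
        · -- a = lv e i, b = yv e
          obtain ⟨rfl, rfl⟩ : e = e' ∧ i = i' := by exact_mod_cast h1
          subst h2
          right; left; rfl
    have hTcard : T.ncard ≤ d + 1 := by
      have hr : (Set.range (lv G d e)).ncard ≤ d - 1 := by
        rw [← Set.image_univ]
        calc ((lv G d e) '' Set.univ).ncard ≤ (Set.univ : Set (Fin (d - 1))).ncard :=
              Set.ncard_image_le (Set.toFinite _)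
          _ = d - 1 := by rw [Set.ncard_univ]; simp
      calc T.ncard ≤ (insert (yv G d e) (Set.range (lv G d e))).ncard + 1 :=
            Set.ncard_insert_le _ _
        _ ≤ (Set.range (lv G d e)).ncard + 1 + 1 := by
            have := Set.ncard_insert_le (yv G d e) (Set.range (lv G d e))
            omega
        _ ≤ d + 1 := by omega
    exact le_trans (hsub _ hxT hcl) hTcard
  -- case analysis on the representative
  obtain ⟨a, haS'⟩ := x
  rw [Set.mem_compl_iff] at haS'
  rcases a with u | p | e | ⟨e, i⟩
  · -- original vertex
    have hu : u ∉ S := fun hc => haS' ((hOV u).mpr hc)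
    exact blockA u hu (Or.inl rfl)
  · -- subdivision vertex u_v
    have hp : ¬ (p.1.1 ∉ S ∧ p.1.2 ∈ S) := fun hc => haS' ((hPV p).mpr hc)
    by_cases h1 : p.1.2 ∈ S
    · have h2 : p.1.1 ∈ S := by by_contra hc; exact hp ⟨hc, h1⟩
      -- isolated vertex
      have hcl : ∀ a b, a ∈ ({pv G d p} : Set (SubVert G d)) → a ∉ S' → b ∉ S' →
          (subGraph G d).Adj a b → b ∈ ({pv G d p} : Set (SubVert G d)) := by
        rintro a b ha haS'' hbS' hadj
        rw [Set.mem_singleton_iff] at ha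
        subst ha
        exfalso
        rcases adj_elim hadj with ⟨u', p', (⟨h1', h2'⟩ | ⟨h1', h2'⟩), h3⟩ |
          ⟨p', e', (⟨h1', h2'⟩ | ⟨h1', h2'⟩), h3⟩ | ⟨e', i', (⟨h1', h2'⟩ | ⟨h1', h2'⟩)⟩ <;>
          try simp at h1'
        · obtain rfl : p = p' := h1'
          subst h2'
          exact hbS' ((hOV _).mpr (h3 ▸ h2))
        · obtain rfl : p = p' := h1'
          subst h2'
          apply hbS'
          refine (hYV e').mpr ?_
          intro α β hαβ
          rw [h3] at hαβ
          rcases Sym2.eq_iff.mp hαβ with ⟨ha, hb⟩ | ⟨ha, hb⟩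
          · subst ha; subst hb; exact iff_of_true h2 h1
          · subst ha; subst hb; exact iff_of_true h1 h2
      calc (Subtype.val '' _).ncard ≤ ({pv G d p} : Set (SubVert G d)).ncard :=
            hsub _ rfl hcl
        _ ≤ d + 1 := by rw [Set.ncard_singleton]; omega
    · by_cases h2 : p.1.1 ∈ S
      · exact blockB ⟨s(p.1.1, p.1.2), (G.mem_edgeSet).mpr p.2⟩ p rfl h2 h1
          (Or.inl rfl)
      · exact blockA p.1.1 h2 (Or.inr ⟨p, rfl, rfl, h1⟩)
  · -- middle vertex y_e
    have hCe : ¬ C e := fun hc => haS' ((hYV e).mpr hc)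
    refine blockB e ⟨((pk e hCe).1.2, (pk e hCe).1.1), (pk e hCe).2.symm⟩ ?_
      (hpk3 e hCe) (hpk2 e hCe) (Or.inr (Or.inl rfl))
    rw [hpk1 e hCe]
    exact Sym2.eq_swap
  · -- leaf
    by_cases hCe : C e
    · have hcl : ∀ a b, a ∈ ({lv G d e i} : Set (SubVert G d)) → a ∉ S' → b ∉ S' →
          (subGraph G d).Adj a b → b ∈ ({lv G d e i} : Set (SubVert G d)) := by
        rintro a b ha haS'' hbS' hadj
        rw [Set.mem_singleton_iff] at ha
        subst ha
        exfalso
        rcases adj_elim hadj with ⟨u', p', (⟨h1', h2'⟩ | ⟨h1', h2'⟩), h3⟩ |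
          ⟨p', e', (⟨h1', h2'⟩ | ⟨h1', h2'⟩), h3⟩ | ⟨e', i', (⟨h1', h2'⟩ | ⟨h1', h2'⟩)⟩ <;>
          try simp at h1'
        obtain ⟨rfl, rfl⟩ : e = e' ∧ i = i' := by exact_mod_cast h1'
        subst h2'
        exact hbS' ((hYV e).mpr hCe)
      calc (Subtype.val '' _).ncard ≤ ({lv G d e i} : Set (SubVert G d)).ncard :=
            hsub _ rfl hcl
        _ ≤ d + 1 := by rw [Set.ncard_singleton]; omega
    · refine blockB e ⟨((pk e hCe).1.2, (pk e hCe).1.1), (pk e hCe).2.symm⟩ ?_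
        (hpk3 e hCe) (hpk2 e hCe) (Or.inr (Or.inr ⟨i, rfl⟩))
      rw [hpk1 e hCe]
      exact Sym2.eq_swap

lemma backward [Fintype V] [DecidableEq V] (G : SimpleGraph V) (k d m : ℕ) (hd : 0 < d)
    (hm : m = G.edgeSet.ncard)
    (S' : Set (SubVert G d)) (hS'card : S'.ncard ≤ k + m)
    (hcomp : ∀ D ∈ ccSets (subGraph G d) S', D.ncard ≤ d + 1) :
    ∃ S : Set V, S.ncard ≤ k ∧ ∀ v ∉ S, ((G.neighborSet v) \ S).ncard ≤ d := by
  classical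
  set core : G.edgeSet → Set (SubVert G d) := fun e =>
    {z | (∃ p, z = pv G d p ∧ (e : Sym2 V) = s(p.1.1, p.1.2)) ∨ z = yv G d e ∨
      ∃ i, z = lv G d e i} with hcore
  have hbound : ∀ (a : SubVert G d) (ha : a ∉ S'),
      (Subtype.val ''
        (((subGraph G d).induce S'ᶜ).connectedComponentMk ⟨a, ha⟩).supp).ncard ≤ d + 1 :=
    fun a ha => hcomp _ (mem_ccSets _ _ _)
  have hlvcard : ∀ e : G.edgeSet, (Set.range (lv G d e)).ncard = d - 1 := by
    intro e
    rw [← Set.image_univ, Set.ncard_image_of_injective _ (fun i j hij => by simpa using hij),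
      Set.ncard_univ]
    simp
  -- the "star" contradiction: if the whole star around y_e survives plus one more vertex
  have star : ∀ (e : G.edgeSet) (p : {p : V × V // G.Adj p.1 p.2}) (z : SubVert G d)
      (hy : yv G d e ∉ S'),
      (e : Sym2 V) = s(p.1.1, p.1.2) →
      pv G d p ∉ S' → (∀ i, lv G d e i ∉ S') →
      ∀ (hz : z ∉ S'),
      z ∉ insert (pv G d p) (insert (yv G d e) (Set.range (lv G d e))) →
      ((subGraph G d).induce S'ᶜ).Reachable ⟨z, hz⟩ ⟨yv G d e, hy⟩ →
      False := by
    intro e p z hy he hp hl hz hznotin hreach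
    set W : Set (SubVert G d) :=
      insert z (insert (pv G d p) (insert (yv G d e) (Set.range (lv G d e)))) with hW
    have hWsub : W ⊆ Subtype.val ''
        (((subGraph G d).induce S'ᶜ).connectedComponentMk ⟨yv G d e, hy⟩).supp := by
      rintro w (rfl | rfl | rfl | ⟨i, rfl⟩)
      · exact mem_comp_of_reachable hreach
      · exact mem_comp_of_reachable (reach_step hp hy (adj_pv_yv p e he))
      · exact mem_comp_of_reachable (Reachable.refl _)
      · exact mem_comp_of_reachable (reach_step (hl i) hy (adj_yv_lv e i).symm)
    have hW1 : (insert (yv G d e) (Set.range (lv G d e))).ncard = d := by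
      rw [Set.ncard_insert_of_notMem (by simp) (Set.toFinite _), hlvcard]
      omega
    have hW2 : (insert (pv G d p) (insert (yv G d e) (Set.range (lv G d e)))).ncard = d + 1 := by
      rw [Set.ncard_insert_of_notMem (by simp) (Set.toFinite _), hW1]
    have hW3 : W.ncard = d + 2 := by
      rw [hW, Set.ncard_insert_of_notMem hznotin (Set.toFinite _), hW2]
    have := Set.ncard_le_ncard hWsub (Set.toFinite _)
    have := hbound (yv G d e) hy
    omega
  -- representatives of edges
  have hrep0 : ∀ e : G.edgeSet, ∃ p : V × V, (e : Sym2 V) = s(p.1, p.2) := by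
    have : ∀ z : Sym2 V, ∃ p : V × V, z = s(p.1, p.2) :=
      fun z => Sym2.inductionOn z (fun x y => ⟨(x, y), rfl⟩)
    exact fun e => this ↑e
  choose rep hrep using hrep0
  -- Step A : every gadget contains a deleted vertex
  have stepA : ∀ e : G.edgeSet, (S' ∩ core e).Nonempty := by
    intro e
    rw [Set.nonempty_iff_ne_empty]
    intro hemp
    rw [Set.eq_empty_iff_forall_notMem] at hemp
    have hnotin : ∀ z, z ∈ core e → z ∉ S' := fun z hz hz' => hemp z ⟨hz', hz⟩
    obtain ⟨⟨u, v⟩, he⟩ : ∃ p : V × V, (e : Sym2 V) = s(p.1, p.2) := ⟨rep e, hrep e⟩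
    have huv : G.Adj u v := by rw [← SimpleGraph.mem_edgeSet, ← he]; exact e.2
    have hp1 : pv G d ⟨(u, v), huv⟩ ∉ S' := hnotin _ (Or.inl ⟨⟨(u, v), huv⟩, rfl, he⟩)
    have hp2 : pv G d ⟨(v, u), huv.symm⟩ ∉ S' :=
      hnotin _ (Or.inl ⟨⟨(v, u), huv.symm⟩, rfl, by rw [he]; exact Sym2.eq_swap⟩)
    have hy : yv G d e ∉ S' := hnotin _ (Or.inr (Or.inl rfl))
    have hl : ∀ i, lv G d e i ∉ S' := fun i => hnotin _ (Or.inr (Or.inr ⟨i, rfl⟩))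
    refine star e ⟨(v, u), huv.symm⟩ (pv G d ⟨(u, v), huv⟩) hy
      (by rw [he]; exact Sym2.eq_swap) hp2 hl hp1 ?_ ?_
    · simp [Prod.ext_iff]
      exact fun h _ => huv.ne h
    · exact reach_step hp1 hy (adj_pv_yv _ e he)
  -- Step B : a gadget between two survivors hit only once is hit at y_e
  have stepB : ∀ (e : G.edgeSet) (u v : V) (huv : G.Adj u v), (e : Sym2 V) = s(u, v) →
      ov G d u ∉ S' → ov G d v ∉ S' → (S' ∩ core e).ncard ≤ 1 →
      pv G d ⟨(u, v), huv⟩ ∉ S' := by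
    intro e u v huv he hu hv hle hmem
    have hin : pv G d ⟨(u, v), huv⟩ ∈ S' ∩ core e := ⟨hmem, Or.inl ⟨_, rfl, he⟩⟩
    have huniq : ∀ z ∈ S' ∩ core e, z = pv G d ⟨(u, v), huv⟩ :=
      fun z hz => (Set.ncard_le_one (Set.toFinite _)).mp hle z hz _ hin
    have hy : yv G d e ∉ S' := by
      intro hc
      have := huniq _ ⟨hc, Or.inr (Or.inl rfl)⟩
      simp at this
    have hpvu : pv G d ⟨(v, u), huv.symm⟩ ∉ S' := by
      intro hc
      have := huniq _ ⟨hc, Or.inl ⟨_, rfl, by rw [he]; exact Sym2.eq_swap⟩⟩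
      simp [Prod.ext_iff] at this
      exact huv.ne' this.1
    have hl : ∀ i, lv G d e i ∉ S' := by
      intro i hc
      have := huniq _ ⟨hc, Or.inr (Or.inr ⟨i, rfl⟩)⟩
      simp at this
    refine star e ⟨(v, u), huv.symm⟩ (ov G d v) hy (by rw [he]; exact Sym2.eq_swap)
      hpvu hl hv (by simp) ?_
    exact (reach_step hv hpvu (adj_ov_pv v ⟨(v, u), huv.symm⟩ rfl)).trans
      (reach_step hpvu hy (adj_pv_yv _ e (by rw [he]; exact Sym2.eq_swap)))
  -- counting
  haveI : Fintype (SubVert G d) := Fintype.ofFinite _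
  haveI : Fintype G.edgeSet := Fintype.ofFinite _
  set S₀ : Set V := {u | ov G d u ∈ S'} with hS₀
  have hdisjcore : ∀ e e' : G.edgeSet, e ≠ e' → ∀ z, z ∈ core e → z ∈ core e' → False := by
    intro e e' hne z hz hz'
    rcases hz with ⟨p, rfl, hp⟩ | rfl | ⟨i, rfl⟩ <;>
      rcases hz' with ⟨p', hzz, hp'⟩ | hzz | ⟨i', hzz⟩ <;> try simp at hzz
    · obtain rfl : p = p' := by simpa using hzz
      exact hne (Subtype.ext (hp.trans hp'.symm))
    · exact hne hzz
    · exact hne hzz.1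
  set Fe : G.edgeSet → Finset (SubVert G d) := fun e => (S' ∩ core e).toFinite.toFinset
    with hFe
  set I₀ : Finset (SubVert G d) := ((Sum.inl '' S₀ : Set (SubVert G d))).toFinite.toFinset
    with hI₀
  set Afin : Finset (SubVert G d) := S'.toFinite.toFinset with hAfin
  set X : Set G.edgeSet := {e | 2 ≤ (S' ∩ core e).ncard} with hX
  set Xfin : Finset G.edgeSet := Finset.univ.filter (fun e => e ∈ X) with hXfin
  have hsubA : I₀ ∪ Finset.univ.biUnion Fe ⊆ Afin := by
    intro z hz
    rw [Finset.mem_union] at hz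
    rw [hAfin, Set.Finite.mem_toFinset]
    rcases hz with hz | hz
    · rw [hI₀, Set.Finite.mem_toFinset] at hz
      obtain ⟨w, hw, rfl⟩ := hz
      exact hw
    · rw [Finset.mem_biUnion] at hz
      obtain ⟨e, _, hz⟩ := hz
      rw [hFe, Set.Finite.mem_toFinset] at hz
      exact hz.1
  have hdisj : Disjoint I₀ (Finset.univ.biUnion Fe) := by
    rw [Finset.disjoint_left]
    intro z hz hz'
    rw [hI₀, Set.Finite.mem_toFinset] at hz
    obtain ⟨w, hw, rfl⟩ := hz
    rw [Finset.mem_biUnion] at hz'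
    obtain ⟨e, _, hz'⟩ := hz'
    rw [hFe, Set.Finite.mem_toFinset] at hz'
    rcases hz'.2 with ⟨p, hp, _⟩ | hp | ⟨i, hp⟩ <;> simp at hp
  have hcardbiU : (Finset.univ.biUnion Fe).card = ∑ e, (Fe e).card := by
    refine Finset.card_biUnion ?_
    intro e _ e' _ hne
    rw [Function.onFun, Finset.disjoint_left]
    intro z hz hz'
    rw [hFe, Set.Finite.mem_toFinset] at hz hz'
    exact hdisjcore e e' hne z hz.2 hz'.2
  have hFecard : ∀ e, (Fe e).card = (S' ∩ core e).ncard := by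
    intro e
    rw [hFe, Set.ncard_eq_toFinset_card _ (Set.toFinite _)]
  have hptwise : ∀ e : G.edgeSet, (if e ∈ X then 2 else 1) ≤ (Fe e).card := by
    intro e
    rw [hFecard]
    split_ifs with h
    · exact h
    · have := (Set.ncard_pos (Set.toFinite _)).mpr (stepA e)
      omega
  have hsum : (m + Xfin.card : ℕ) ≤ ∑ e, (Fe e).card := by
    calc (m + Xfin.card : ℕ) = ∑ e : G.edgeSet, (if e ∈ X then 2 else 1) := by
          have : ∀ e : G.edgeSet, (if e ∈ X then 2 else 1) = 1 + (if e ∈ X then 1 else 0) := by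
            intro e; split_ifs <;> rfl
          rw [Finset.sum_congr rfl (fun e _ => this e), Finset.sum_add_distrib,
            Finset.sum_const, ← Finset.card_filter]
          simp only [smul_eq_mul, mul_one, Finset.card_univ, hXfin]
          rw [hm, ← Nat.card_coe_set_eq, Nat.card_eq_fintype_card]
      _ ≤ ∑ e, (Fe e).card := Finset.sum_le_sum (fun e _ => hptwise e)
  have hI₀card : I₀.card = S₀.ncard := by
    rw [hI₀, ← Set.ncard_eq_toFinset_card _ (Set.toFinite _),
      Set.ncard_image_of_injective _ Sum.inl_injective]
  have hAcard : Afin.card = S'.ncard := by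
    rw [hAfin, ← Set.ncard_eq_toFinset_card _ (Set.toFinite _)]
  have hkey : S₀.ncard + Xfin.card ≤ k := by
    have h1 : (I₀ ∪ Finset.univ.biUnion Fe).card ≤ Afin.card := Finset.card_le_card hsubA
    rw [Finset.card_union_of_disjoint hdisj, hcardbiU] at h1
    omega
  -- the deletion set in G
  set S : Set V := S₀ ∪ ((fun e => (rep e).1) '' X) with hS
  have hXcard : X.ncard = Xfin.card := by
    have h9 : X = ↑Xfin := by ext e; simp [hXfin]
    rw [h9, Set.ncard_coe_finset]
  have hScard : S.ncard ≤ k := by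
    calc S.ncard ≤ S₀.ncard + ((fun e => (rep e).1) '' X).ncard := Set.ncard_union_le _ _
      _ ≤ S₀.ncard + X.ncard := by
          have := Set.ncard_image_le (f := fun e => (rep e).1) (Set.toFinite X)
          omega
      _ ≤ k := by rw [hXcard]; omega
  refine ⟨S, hScard, ?_⟩
  -- degree condition
  intro u huS
  have hu0 : u ∉ S₀ := fun hc => huS (Or.inl hc)
  have huS' : ov G d u ∉ S' := hu0
  have hD := hbound (ov G d u) huS'
  set D := Subtype.val ''
    (((subGraph G d).induce S'ᶜ).connectedComponentMk ⟨ov G d u, huS'⟩).supp with hDdef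
  set f : V → SubVert G d := fun v => if h : G.Adj u v then pv G d ⟨(u, v), h⟩ else ov G d u
    with hf
  have hfeq : ∀ (v : V) (h : G.Adj u v), f v = pv G d ⟨(u, v), h⟩ := by
    intro v h
    rw [hf]; dsimp only; rw [dif_pos h]
  have himg : ∀ v ∈ G.neighborSet u \ S, f v ∈ D := by
    rintro v ⟨hadj, hvS⟩
    have hv0 : v ∉ S₀ := fun hc => hvS (Or.inl hc)
    have hvS' : ov G d v ∉ S' := hv0
    have hmem : s(u, v) ∈ G.edgeSet := (G.mem_edgeSet).mpr hadj
    set e : G.edgeSet := ⟨s(u, v), hmem⟩ with he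
    have heX : e ∉ X := by
      intro hc
      have : (rep e).1 ∈ S := Or.inr ⟨e, hc, rfl⟩
      have hee : s((rep e).1, (rep e).2) = s(u, v) := by rw [← hrep e]
      rcases Sym2.eq_iff.mp hee with ⟨ha, _⟩ | ⟨ha, _⟩
      · exact huS (ha ▸ this)
      · exact hvS (ha ▸ this)
    have hle : (S' ∩ core e).ncard ≤ 1 := by
      by_contra hc
      exact heX (by rw [hX]; simp only [Set.mem_setOf_eq]; omega)
    have hpv : pv G d ⟨(u, v), hadj⟩ ∉ S' := stepB e u v hadj rfl huS' hvS' hle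
    rw [hfeq v hadj]
    exact mem_comp_of_reachable (reach_step hpv huS' (adj_ov_pv u ⟨(u, v), hadj⟩ rfl).symm)
  have hWsub : insert (ov G d u) (f '' (G.neighborSet u \ S)) ⊆ D := by
    rintro z (rfl | ⟨v, hv, rfl⟩)
    · exact mem_comp_of_reachable (Reachable.refl _)
    · exact himg v hv
  have hfinj : Set.InjOn f (G.neighborSet u \ S) := by
    rintro v hv v' hv' heq
    rw [hfeq v hv.1, hfeq v' hv'.1] at heq
    exact congrArg (fun q => q.1.2) (Sum.inl_injective (Sum.inr_injective heq))
  have hnotmem : ov G d u ∉ f '' (G.neighborSet u \ S) := by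
    rintro ⟨v, hv, hveq⟩
    rw [hfeq v hv.1] at hveq
    simp at hveq
  have hWcard : (insert (ov G d u) (f '' (G.neighborSet u \ S))).ncard =
      (G.neighborSet u \ S).ncard + 1 := by
    rw [Set.ncard_insert_of_notMem hnotmem (Set.toFinite _), Set.ncard_image_of_injOn hfinj]
  have hfin := Set.ncard_le_ncard hWsub (Set.toFinite _)
  omega

/-- `G` has a set `S` of at most `k` vertices whose removal leaves maximum degree at most
`d`, iff `G'` has a set `S'` of at most `k + m` vertices whose removal leaves connected
components with at most `d + 1` vertices each (`m` = number of edges of `G`). -/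
theorem bddDegreeDeletion_iff_componentOrderConnectivity [Fintype V] [DecidableEq V]
    (G : SimpleGraph V) (k d m : ℕ) (hk : 0 < k) (hd : 0 < d)
    (hm : m = G.edgeSet.ncard) :
    (∃ S : Set V, S.ncard ≤ k ∧ ∀ v ∉ S, ((G.neighborSet v) \ S).ncard ≤ d) ↔
    (∃ S' : Set (SubVert G d), S'.ncard ≤ k + m ∧
      ∀ D ∈ ccSets (subGraph G d) S', D.ncard ≤ d + 1) := by
  constructor
  · rintro ⟨S, h1, h2⟩
    exact forward G k d m hd hm S h1 h2
  · rintro ⟨S', h1, h2⟩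
    exact backward G k d m hd hm S' h1 h2
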